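/- (Observed disparity decomposition for equality of opportunity.) With Ỹ = A·Y + (1−A)·Ŷ, define μ^i = P(A=1 | Y=1, Z=i), φ̃^i = P(Ỹ=1 | Z=i), r^i = P(A=0 | Z=i), ε^i = E[Ŷ − Y | A=0, Z=i], and κ^i = 1 − r^i ε^i / φ̃^i. Then the observed disparity Δ̃ = P(A=1 | Ỹ=1, Z=1) − P(A=1 | Ỹ=1, Z=0) equals μ^1 κ^1 − μ^0 κ^0. -/

import Mathlib

open MeasureTheory

/-- Conditional probability `P(E | C) = μ(E ∩ C) / μ(C)` as a real number. -/
noncomputable def condProb {Ω : Type*} [MeasurableSpace Ω]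
    (μ : Measure Ω) (E C : Set Ω) : ℝ :=
  (μ (E ∩ C)).toReal / (μ C).toReal

/-- Conditional expectation `E[f | C] = (∫_C f dμ) / μ(C)`. -/
noncomputable def condExp' {Ω : Type*} [MeasurableSpace Ω]
    (μ : Measure Ω) (f : Ω → ℝ) (C : Set Ω) : ℝ :=
  (∫ ω in C, f ω ∂μ) / (μ C).toReal

lemma int_ind {Ω : Type*} [MeasurableSpace Ω] (μ : Measure Ω) [IsFiniteMeasure μ]
    (f : Ω → ℕ) (hf : Measurable f) (hf01 : ∀ ω, f ω = 0 ∨ f ω = 1)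
    (C : Set Ω) :
    ∫ ω in C, (f ω : ℝ) ∂μ = (μ ({ω | f ω = 1} ∩ C)).toReal := by
  have hfe : (fun ω => (f ω : ℝ)) = Set.indicator {ω | f ω = 1} (fun _ => (1:ℝ)) := by
    funext ω; rcases hf01 ω with h|h <;> simp [Set.indicator, h]
  have hS : MeasurableSet {ω | f ω = 1} := hf (measurableSet_singleton 1)
  rw [hfe, setIntegral_indicator hS, setIntegral_const, Set.inter_comm]
  simp
  rfl

lemma ind_integrable {Ω : Type*} [MeasurableSpace Ω] (μ : Measure Ω) [IsFiniteMeasure μ]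
    (f : Ω → ℕ) (hf : Measurable f) (hf01 : ∀ ω, f ω = 0 ∨ f ω = 1)
    (C : Set Ω) : Integrable (fun ω => (f ω : ℝ)) (μ.restrict C) := by
  have hfe : (fun ω => (f ω : ℝ)) = Set.indicator {ω | f ω = 1} (fun _ => (1:ℝ)) := by
    funext ω; rcases hf01 ω with h|h <;> simp [Set.indicator, h]
  rw [hfe]
  exact (integrable_const (1:ℝ)).indicator (hf (measurableSet_singleton 1))

lemma key {Ω : Type*} [MeasurableSpace Ω]
    (μ : Measure Ω) [IsProbabilityMeasure μ]
    (A Y Yh Z : Ω → ℕ)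
    (hA : Measurable A) (hY : Measurable Y) (hYh : Measurable Yh)
    (hZ : Measurable Z)
    (hA01 : ∀ ω, A ω = 0 ∨ A ω = 1)
    (hY01 : ∀ ω, Y ω = 0 ∨ Y ω = 1)
    (hYh01 : ∀ ω, Yh ω = 0 ∨ Yh ω = 1)
    (i : ℕ)
    (hYtZ : μ ({ω | A ω * Y ω + (1 - A ω) * Yh ω = 1} ∩ {ω | Z ω = i}) ≠ 0)
    (hYZ : μ ({ω | Y ω = 1} ∩ {ω | Z ω = i}) ≠ 0)
    (hAZ : μ ({ω | A ω = 0} ∩ {ω | Z ω = i}) ≠ 0) :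
    condProb μ {ω | A ω = 1}
        ({ω | A ω * Y ω + (1 - A ω) * Yh ω = 1} ∩ {ω | Z ω = i})
    = condProb μ {ω | A ω = 1} ({ω | Y ω = 1} ∩ {ω | Z ω = i})
        * (1 - condProb μ {ω | A ω = 0} {ω | Z ω = i}
              * condExp' μ (fun ω => (Yh ω : ℝ) - (Y ω : ℝ))
                  ({ω | A ω = 0} ∩ {ω | Z ω = i})
              / condProb μ {ω | A ω * Y ω + (1 - A ω) * Yh ω = 1} {ω | Z ω = i}) := by
  set Zi : Set Ω := {ω | Z ω = i} with hZi
  set T : Set Ω := {ω | A ω * Y ω + (1 - A ω) * Yh ω = 1} with hT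
  -- measurable sets
  have mA1 : MeasurableSet {ω | A ω = 1} := hA (measurableSet_singleton 1)
  have mA0 : MeasurableSet {ω | A ω = 0} := hA (measurableSet_singleton 0)
  have mY1 : MeasurableSet {ω | Y ω = 1} := hY (measurableSet_singleton 1)
  have mYh1 : MeasurableSet {ω | Yh ω = 1} := hYh (measurableSet_singleton 1)
  have mZi : MeasurableSet Zi := hZ (measurableSet_singleton i)
  -- abbreviations for key reals
  set a := (μ ({ω | A ω = 1} ∩ ({ω | Y ω = 1} ∩ Zi))).toReal with ha
  set b := (μ ({ω | A ω = 0} ∩ ({ω | Yh ω = 1} ∩ Zi))).toReal with hb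
  set c := (μ ({ω | A ω = 0} ∩ ({ω | Y ω = 1} ∩ Zi))).toReal with hc
  set r := (μ ({ω | A ω = 0} ∩ Zi)).toReal with hr
  set z := (μ Zi).toReal with hz
  -- set identities
  have e1 : {ω | A ω = 1} ∩ (T ∩ Zi) = {ω | A ω = 1} ∩ ({ω | Y ω = 1} ∩ Zi) := by
    ext ω; rcases hA01 ω with h|h <;>
      simp [hT, hZi, Set.mem_inter_iff, h, and_assoc]
  have e2 : T ∩ Zi = ({ω | A ω = 1} ∩ ({ω | Y ω = 1} ∩ Zi)) ∪
      ({ω | A ω = 0} ∩ ({ω | Yh ω = 1} ∩ Zi)) := by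
    ext ω; rcases hA01 ω with h|h <;>
      simp [hT, hZi, Set.mem_inter_iff, h]
  have e3 : {ω | Y ω = 1} ∩ Zi = ({ω | A ω = 1} ∩ ({ω | Y ω = 1} ∩ Zi)) ∪
      ({ω | A ω = 0} ∩ ({ω | Y ω = 1} ∩ Zi)) := by
    ext ω; rcases hA01 ω with h|h <;>
      simp [hZi, Set.mem_inter_iff, h]
  have hdisj : ∀ (S S' : Set Ω), Disjoint ({ω | A ω = 1} ∩ S)
      ({ω | A ω = 0} ∩ S') := by
    intro S S'
    refine Set.disjoint_left.2 ?_
    rintro ω ⟨h1, _⟩ ⟨h0, _⟩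
    simp only [Set.mem_setOf_eq] at h0 h1
    omega
  -- measure computations
  have mT : (μ (T ∩ Zi)).toReal = a + b := by
    rw [e2, measure_union (hdisj _ _) (mA0.inter (mYh1.inter mZi))]
    rw [ENNReal.toReal_add (measure_ne_top _ _) (measure_ne_top _ _)]
  have mY : (μ ({ω | Y ω = 1} ∩ Zi)).toReal = a + c := by
    rw [e3, measure_union (hdisj _ _) (mA0.inter (mY1.inter mZi))]
    rw [ENNReal.toReal_add (measure_ne_top _ _) (measure_ne_top _ _)]
  -- integral
  have hint : ∫ ω in ({ω | A ω = 0} ∩ Zi), ((Yh ω : ℝ) - (Y ω : ℝ)) ∂μ = b - c := by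
    rw [integral_sub (ind_integrable μ Yh hYh hYh01 _) (ind_integrable μ Y hY hY01 _),
      int_ind μ Yh hYh hYh01 _, int_ind μ Y hY hY01 _]
    congr 2 <;>
      · congr 1; ext ω
        simp only [Set.mem_inter_iff, Set.mem_setOf_eq]; tauto
  -- nonvanishing
  have hane : ∀ s : Set Ω, μ s ≠ 0 → (μ s).toReal ≠ 0 := fun s h =>
    ENNReal.toReal_ne_zero.2 ⟨h, measure_ne_top _ _⟩
  have htne : (μ (T ∩ Zi)).toReal ≠ 0 := hane _ hYtZ
  have hyne : (μ ({ω | Y ω = 1} ∩ Zi)).toReal ≠ 0 := hane _ hYZ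
  have hrne : r ≠ 0 := hane _ hAZ
  have hzne : z ≠ 0 := by
    apply hane
    intro h
    exact hYtZ (le_antisymm (le_trans (measure_mono Set.inter_subset_right) h.le)
      zero_le) 
  -- unfold and conclude
  rw [condProb, condProb, condProb, condProb, condExp', e1, mT, mY, hint]
  rw [mY] at hyne
  rw [mT] at htne
  field_simp
  have h1 : r * r⁻¹ = 1 := mul_inv_cancel₀ hrne
  have h2 : z * z⁻¹ = 1 := mul_inv_cancel₀ hzne
  linear_combination (-(a*c - a*b)*z*z⁻¹) * h1 + (-(a*c - a*b)) * h2

/-- Observed disparity decomposition for equality of opportunity: with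
`Ỹ = A·Y + (1-A)·Ŷ`, `μⁱ = P(A=1|Y=1,Z=i)`, `φ̃ⁱ = P(Ỹ=1|Z=i)`,
`rⁱ = P(A=0|Z=i)`, `εⁱ = E[Ŷ-Y|A=0,Z=i]`, `κⁱ = 1 - rⁱεⁱ/φ̃ⁱ`:
`P(A=1|Ỹ=1,Z=1) - P(A=1|Ỹ=1,Z=0) = μ¹κ¹ - μ⁰κ⁰`. -/
theorem stmt_9 {Ω : Type*} [MeasurableSpace Ω]
    (μ : Measure Ω) [IsProbabilityMeasure μ]
    (A Y Yh Z : Ω → ℕ)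
    (hA : Measurable A) (hY : Measurable Y) (hYh : Measurable Yh)
    (hZ : Measurable Z)
    (hA01 : ∀ ω, A ω = 0 ∨ A ω = 1)
    (hY01 : ∀ ω, Y ω = 0 ∨ Y ω = 1)
    (hYh01 : ∀ ω, Yh ω = 0 ∨ Yh ω = 1)
    (hYtZ : ∀ i, i = 0 ∨ i = 1 →
      μ ({ω | A ω * Y ω + (1 - A ω) * Yh ω = 1} ∩ {ω | Z ω = i}) ≠ 0)
    (hYZ : ∀ i, i = 0 ∨ i = 1 → μ ({ω | Y ω = 1} ∩ {ω | Z ω = i}) ≠ 0)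
    (hAZ : ∀ i, i = 0 ∨ i = 1 → μ ({ω | A ω = 0} ∩ {ω | Z ω = i}) ≠ 0) :
    condProb μ {ω | A ω = 1}
        ({ω | A ω * Y ω + (1 - A ω) * Yh ω = 1} ∩ {ω | Z ω = 1})
      - condProb μ {ω | A ω = 1}
        ({ω | A ω * Y ω + (1 - A ω) * Yh ω = 1} ∩ {ω | Z ω = 0})
    = condProb μ {ω | A ω = 1} ({ω | Y ω = 1} ∩ {ω | Z ω = 1})
        * (1 - condProb μ {ω | A ω = 0} {ω | Z ω = 1}
              * condExp' μ (fun ω => (Yh ω : ℝ) - (Y ω : ℝ))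
                  ({ω | A ω = 0} ∩ {ω | Z ω = 1})
              / condProb μ {ω | A ω * Y ω + (1 - A ω) * Yh ω = 1} {ω | Z ω = 1})
      - condProb μ {ω | A ω = 1} ({ω | Y ω = 1} ∩ {ω | Z ω = 0})
        * (1 - condProb μ {ω | A ω = 0} {ω | Z ω = 0}
              * condExp' μ (fun ω => (Yh ω : ℝ) - (Y ω : ℝ))
                  ({ω | A ω = 0} ∩ {ω | Z ω = 0})
              / condProb μ {ω | A ω * Y ω + (1 - A ω) * Yh ω = 1} {ω | Z ω = 0}) := by
  rw [key μ A Y Yh Z hA hY hYh hZ hA01 hY01 hYh01 1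
      (hYtZ 1 (Or.inr rfl)) (hYZ 1 (Or.inr rfl)) (hAZ 1 (Or.inr rfl)),
    key μ A Y Yh Z hA hY hYh hZ hA01 hY01 hYh01 0
      (hYtZ 0 (Or.inl rfl)) (hYZ 0 (Or.inl rfl)) (hAZ 0 (Or.inl rfl))]
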